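/- arXiv:1608.07329 — 5 statements merged into one kernel-verified Lean document; each statement's English description precedes it below -/
import Mathlib

section
/- Let σ ≤ k be positive integers. The maximum of Σ_{j=1}^{k} |N(S_j)|, taken over all schedules, i.e. families (S_1,…,S_k) of subsets of X in which each x ∈ X belongs to at most σ of the sets S_j, equals the maximum of Σ_{y ∈ Y} |F(y)| taken over all labelings f that assign to each x ∈ X a set f(x) of exactly σ labels from {1,…,k}. (Hence the optimal scheduling problem for average detection/isolation is equivalent to the graph labeling problem.) -/
open Finset

lemma card_eq_sum_ite_mem {α : Type*} [Fintype α] [DecidableEq α] (s : Finset α) :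
    s.card = ∑ a : α, if a ∈ s then 1 else 0 := by
  rw [← Finset.filter_univ_mem s, Finset.card_filter]
  simp

lemma count_swap_aux {X Y : Type*} [Fintype X] [Fintype Y] [DecidableEq X] [DecidableEq Y]
    (A : X → Y → Prop) [∀ x y, Decidable (A x y)] {k : ℕ} (S : Fin k → Finset X) :
    ∑ j : Fin k, ((S j).biUnion (fun x => Finset.univ.filter fun y : Y => A x y)).card
    = ∑ y : Y, ((Finset.univ.filter fun x : X => A x y).biUnion
        (fun x => Finset.univ.filter fun j : Fin k => x ∈ S j)).card := by
  calc ∑ j : Fin k, ((S j).biUnion (fun x => Finset.univ.filter fun y : Y => A x y)).card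
      = ∑ j : Fin k, ∑ y : Y, if (∃ x ∈ S j, A x y) then 1 else 0 := by
        refine Finset.sum_congr rfl fun j _ => ?_
        rw [card_eq_sum_ite_mem]
        refine Finset.sum_congr rfl fun y _ => ?_
        congr 1
        simp [Finset.mem_biUnion]
    _ = ∑ y : Y, ∑ j : Fin k, if (∃ x ∈ S j, A x y) then 1 else 0 := Finset.sum_comm
    _ = ∑ y : Y, ((Finset.univ.filter fun x : X => A x y).biUnion
        (fun x => Finset.univ.filter fun j : Fin k => x ∈ S j)).card := by
        refine Finset.sum_congr rfl fun y _ => ?_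
        rw [card_eq_sum_ite_mem]
        refine Finset.sum_congr rfl fun j _ => ?_
        congr 1
        simp [Finset.mem_biUnion]
        tauto

/-- the maximum of `Σ_j |N(S_j)|` over all schedules `(S_1,…,S_k)` of
subsets of `X` where each `x` belongs to at most `σ` of the sets, equals the maximum
of `Σ_{y ∈ Y} |F(y)|` over all labelings assigning exactly `σ` labels from `{1,…,k}`
to each `x ∈ X`. -/
theorem schedule_max_eq_labeling_max
    {X Y : Type*} [Fintype X] [Fintype Y] [DecidableEq X] [DecidableEq Y]
    (A : X → Y → Prop) [∀ x y, Decidable (A x y)] (k σ : ℕ) (hσ : 0 < σ) (hk : σ ≤ k) :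
    ((Finset.univ : Finset (Fin k → Finset X)).filter
        (fun S => ∀ x : X, (Finset.univ.filter fun j : Fin k => x ∈ S j).card ≤ σ)).sup
      (fun S => ∑ j : Fin k,
        ((S j).biUnion (fun x => Finset.univ.filter fun y : Y => A x y)).card)
    = ((Finset.univ : Finset (X → Finset (Fin k))).filter
        (fun f => ∀ x : X, (f x).card = σ)).sup
      (fun f => ∑ y : Y, ((Finset.univ.filter fun x : X => A x y).biUnion f).card) := by
  classical
  apply le_antisymm
  · apply Finset.sup_le
    intro S hS
    simp only [Finset.mem_filter, Finset.mem_univ, true_and] at hS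
    set f0 : X → Finset (Fin k) := fun x => Finset.univ.filter (fun j => x ∈ S j) with hf0
    have hex : ∀ x : X, ∃ t : Finset (Fin k), f0 x ⊆ t ∧ t ⊆ Finset.univ ∧ t.card = σ := by
      intro x
      exact Finset.exists_subsuperset_card_eq (Finset.subset_univ _) (hS x)
        (by simpa using hk)
    choose g hg1 _ hg3 using hex
    have hmem : g ∈ ((Finset.univ : Finset (X → Finset (Fin k))).filter
        (fun f => ∀ x : X, (f x).card = σ)) := by
      simp only [Finset.mem_filter, Finset.mem_univ, true_and]
      exact hg3
    refine le_trans ?_ (Finset.le_sup hmem)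
    rw [count_swap_aux A S]
    refine Finset.sum_le_sum fun y _ => ?_
    exact Finset.card_le_card (Finset.biUnion_mono (fun x _ => hg1 x))
  · apply Finset.sup_le
    intro f hf
    simp only [Finset.mem_filter, Finset.mem_univ, true_and] at hf
    set S : Fin k → Finset X := fun j => Finset.univ.filter (fun x => j ∈ f x) with hSdef
    have hmem : S ∈ ((Finset.univ : Finset (Fin k → Finset X)).filter
        (fun S => ∀ x : X, (Finset.univ.filter fun j : Fin k => x ∈ S j).card ≤ σ)) := by
      simp only [Finset.mem_filter, Finset.mem_univ, true_and]
      intro x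
      have : (Finset.univ.filter fun j : Fin k => x ∈ S j) = f x := by
        ext j; simp [hSdef]
      rw [this, hf x]
    refine le_trans ?_ (Finset.le_sup hmem)
    rw [count_swap_aux A S]
    refine le_of_eq (Finset.sum_congr rfl fun y _ => ?_)
    congr 1
    ext j
    simp [hSdef]
end

section
/- For every labeling f and every x ∈ X, the potential decomposes as φ(f) = U_x(f) + Σ_{j=1}^{k} |⋃_{z ∈ S_j(f), z ≠ x} N(z)|; that is, the potential equals the utility of player x plus, summed over all labels j, the number of targets covered in slot j by devices other than x. -/
open Finset

/-- The set of targets covered by the device at `x`. -/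
def Nbr {X Y : Type*} [Fintype Y] (A : X → Y → Prop) [∀ x y, Decidable (A x y)] (x : X) :
    Finset Y :=
  Finset.univ.filter fun y => A x y

/-- The set of devices active in slot `j` under labeling `f`. -/
def Sset {X : Type*} [Fintype X] {k : ℕ} (f : X → Finset (Fin k)) (j : Fin k) :
    Finset X :=
  Finset.univ.filter fun x => j ∈ f x

/-- The potential `φ(f) = Σ_{j=1}^{k} |⋃_{x ∈ S_j(f)} N(x)|`. -/
def potential {X Y : Type*} [Fintype X] [Fintype Y] [DecidableEq Y]
    (A : X → Y → Prop) [∀ x y, Decidable (A x y)] {k : ℕ} (f : X → Finset (Fin k)) : ℕ :=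
  ∑ j : Fin k, ((Sset f j).biUnion (Nbr A)).card

/-- The utility of player `x`:
`U_x(f) = Σ_{j ∈ f(x)} |N(x) \ ⋃_{z ∈ S_j(f), z ≠ x} N(z)|`. -/
def utility {X Y : Type*} [Fintype X] [Fintype Y] [DecidableEq X] [DecidableEq Y]
    (A : X → Y → Prop) [∀ x y, Decidable (A x y)] {k : ℕ} (f : X → Finset (Fin k)) (x : X) : ℕ :=
  ∑ j ∈ f x, ((Nbr A x) \ (((Sset f j).erase x).biUnion (Nbr A))).card

/-- for every labeling `f` and every `x ∈ X`, the potential decomposes as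
`φ(f) = U_x(f) + Σ_{j=1}^{k} |⋃_{z ∈ S_j(f), z ≠ x} N(z)|`. -/
theorem potential_decomposition
    {X Y : Type*} [Fintype X] [Fintype Y] [DecidableEq X] [DecidableEq Y]
    (A : X → Y → Prop) [∀ x y, Decidable (A x y)] (k : ℕ)
    (f : X → Finset (Fin k)) (x : X) :
    potential A f
      = utility A f x
        + ∑ j : Fin k, (((Sset f j).erase x).biUnion (Nbr A)).card := by
  have key : ∀ j : Fin k,
      ((Sset f j).biUnion (Nbr A)).card
        = (if j ∈ f x then ((Nbr A x) \ (((Sset f j).erase x).biUnion (Nbr A))).card else 0)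
          + (((Sset f j).erase x).biUnion (Nbr A)).card := by
    intro j
    by_cases hj : j ∈ f x
    · simp only [hj, if_true]
      have hx : x ∈ Sset f j := by simp [Sset, hj]
      have : Sset f j = insert x ((Sset f j).erase x) := (Finset.insert_erase hx).symm
      rw [this, Finset.biUnion_insert, ← Finset.card_sdiff_add_card]
      simp [Finset.erase_insert_eq_erase]
    · simp only [hj, if_false, zero_add]
      have hx : x ∉ Sset f j := by simp [Sset, hj]
      rw [Finset.erase_eq_of_notMem hx]
  rw [potential, Finset.sum_congr rfl fun j _ => key j, Finset.sum_add_distrib]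
  congr 1
  rw [utility, Finset.sum_ite_mem, Finset.univ_inter]
end

section
/- The graph labeling game is a potential game with potential function φ: for every player x ∈ X and every pair of labelings f and f' that agree on all players other than x (i.e., f(z) = f'(z) for all z ≠ x), the change in x's utility equals the change in the potential: U_x(f) − U_x(f') = φ(f) − φ(f'). -/
open Finset

/-- the labeling game is a potential game with potential `φ`: for every
player `x` and every pair of labelings `f`, `f'` agreeing on all players other than
`x`, the change in `x`'s utility equals the change in the potential. -/
theorem labeling_potential_game
    {X Y : Type*} [Fintype X] [Fintype Y] [DecidableEq X] [DecidableEq Y]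
    (A : X → Y → Prop) [∀ x y, Decidable (A x y)] (k : ℕ)
    (x : X) (f f' : X → Finset (Fin k))
    (h : ∀ z : X, z ≠ x → f z = f' z) :
    (utility A f x : ℤ) - utility A f' x
      = (potential A f : ℤ) - potential A f' := by
  have key : ∀ (g : X → Finset (Fin k)) (j : Fin k),
      ((Sset g j).biUnion (Nbr A)).card
        = (((Sset g j).erase x).biUnion (Nbr A)).card
          + (if j ∈ g x then ((Nbr A x) \ (((Sset g j).erase x).biUnion (Nbr A))).card else 0) := by
    intro g j
    by_cases hj : j ∈ g x
    · have hx : x ∈ Sset g j := by simp [Sset, hj]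
      have : Sset g j = insert x ((Sset g j).erase x) := (Finset.insert_erase hx).symm
      rw [if_pos hj]
      conv_lhs => rw [this]
      rw [Finset.biUnion_insert]
      rw [← Finset.card_sdiff_add_card]
      omega
    · have hx : x ∉ Sset g j := by simp [Sset, hj]
      rw [if_neg hj, Finset.erase_eq_of_notMem hx]; omega
  have hsame : ∀ j : Fin k, (Sset f j).erase x = (Sset f' j).erase x := by
    intro j
    ext z
    by_cases hz : z = x
    · simp [hz]
    · simp [Sset, hz, h z hz]
  have hpot : ∀ (g : X → Finset (Fin k)),
      potential A g = (∑ j : Fin k, (((Sset g j).erase x).biUnion (Nbr A)).card)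
        + utility A g x := by
    intro g
    calc potential A g
        = ∑ j : Fin k, ((((Sset g j).erase x).biUnion (Nbr A)).card
            + (if j ∈ g x then ((Nbr A x) \ (((Sset g j).erase x).biUnion (Nbr A))).card else 0)) :=
          Finset.sum_congr rfl (fun j _ => key g j)
      _ = (∑ j : Fin k, (((Sset g j).erase x).biUnion (Nbr A)).card)
            + ∑ j : Fin k, (if j ∈ g x then ((Nbr A x) \ (((Sset g j).erase x).biUnion (Nbr A))).card else 0) :=
          Finset.sum_add_distrib
      _ = _ := by rw [utility, Finset.sum_ite_mem, Finset.univ_inter]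
  have e1 := hpot f
  have e2 := hpot f'
  have hbase : (∑ j : Fin k, (((Sset f j).erase x).biUnion (Nbr A)).card)
      = ∑ j : Fin k, (((Sset f' j).erase x).biUnion (Nbr A)).card := by
    apply Finset.sum_congr rfl
    intro j _
    rw [hsame j]
  omega
end

section
/- Every maximizer of the potential function is a Nash equilibrium of the labeling game: if a labeling f maximizes φ among all labelings, then for every player x ∈ X and every labeling f' that agrees with f on all players other than x, we have U_x(f) ≥ U_x(f'). -/
open Finset

lemma potential_decomp {X Y : Type*} [Fintype X] [Fintype Y] [DecidableEq X] [DecidableEq Y]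
    (A : X → Y → Prop) [∀ x y, Decidable (A x y)] {k : ℕ} (f : X → Finset (Fin k)) (x : X) :
    potential A f =
      utility A f x + ∑ j : Fin k, (((Sset f j).erase x).biUnion (Nbr A)).card := by
  unfold potential utility
  have key : ∀ j : Fin k, ((Sset f j).biUnion (Nbr A)).card =
      (if j ∈ f x then ((Nbr A x) \ (((Sset f j).erase x).biUnion (Nbr A))).card else 0)
        + (((Sset f j).erase x).biUnion (Nbr A)).card := by
    intro j
    by_cases hj : j ∈ f x
    · have hx : x ∈ Sset f j := by simp [Sset, hj]
      rw [if_pos hj]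
      conv_lhs => rw [← Finset.insert_erase hx]
      rw [Finset.biUnion_insert]
      exact (Finset.card_sdiff_add_card _ _).symm.trans rfl |>.trans rfl
    · have hx : x ∉ Sset f j := by simp [Sset, hj]
      rw [if_neg hj, Finset.erase_eq_of_notMem hx]
      simp
  rw [Finset.sum_congr rfl (fun j _ => key j), Finset.sum_add_distrib]
  congr 1
  rw [Finset.sum_ite_mem, Finset.univ_inter]

/-- every maximizer of the potential function is a Nash equilibrium of
the labeling game. -/
theorem potential_maximizer_is_nash
    {X Y : Type*} [Fintype X] [Fintype Y] [DecidableEq X] [DecidableEq Y]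
    (A : X → Y → Prop) [∀ x y, Decidable (A x y)] (k : ℕ)
    (f : X → Finset (Fin k))
    (hmax : ∀ g : X → Finset (Fin k), potential A g ≤ potential A f) :
    ∀ (x : X) (f' : X → Finset (Fin k)),
      (∀ z : X, z ≠ x → f' z = f z) → utility A f' x ≤ utility A f x := by
  intro x f' hf'
  have herase : ∀ j : Fin k, (Sset f' j).erase x = (Sset f j).erase x := by
    intro j
    ext z
    simp only [Finset.mem_erase, Sset, Finset.mem_filter, Finset.mem_univ, true_and]
    constructor
    · rintro ⟨hz, hj⟩; exact ⟨hz, by rwa [hf' z hz] at hj⟩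
    · rintro ⟨hz, hj⟩; exact ⟨hz, by rwa [hf' z hz]⟩
  have h1 := potential_decomp A f x
  have h2 := potential_decomp A f' x
  have h3 : ∑ j : Fin k, (((Sset f' j).erase x).biUnion (Nbr A)).card
      = ∑ j : Fin k, (((Sset f j).erase x).biUnion (Nbr A)).card := by
    exact Finset.sum_congr rfl fun j _ => by rw [herase j]
  have := hmax f'
  omega
end

section
/- The optimal average detection performance is non-increasing in the network lifetime: fix a positive integer σ and for each positive integer k let M(k) denote the maximum of Σ_{j=1}^{k} |N(S_j)| over all families (S_1,…,S_k) of subsets of X in which each x ∈ X belongs to at most σ of the sets S_j. Then for all positive integers k ≤ k', M(k)/k ≥ M(k')/k'. -/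
open Finset

/-- `Mval A σ k` is the maximum of `Σ_{j=1}^{k} |N(S_j)|` over all schedules
`(S_1,…,S_k)` of subsets of `X` in which each `x ∈ X` belongs to at most `σ` of the
sets `S_j`. -/
def Mval {X Y : Type*} [Fintype X] [Fintype Y] [DecidableEq X] [DecidableEq Y]
    (A : X → Y → Prop) [∀ x y, Decidable (A x y)] (σ k : ℕ) : ℕ :=
  ((Finset.univ : Finset (Fin k → Finset X)).filter
      (fun S => ∀ x : X, (Finset.univ.filter fun j : Fin k => x ∈ S j).card ≤ σ)).sup
    (fun S => ∑ j : Fin k,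
      ((S j).biUnion (fun x => Finset.univ.filter fun y : Y => A x y)).card)

/-- Among any `s`, there is a subset `t` of size `k` whose `f`-sum is at least the
`k/|s|` fraction of the total: the top `k` elements work. -/
lemma top_k_sum {α : Type*} [DecidableEq α] (f : α → ℕ) :
    ∀ (k : ℕ) (s : Finset α), k ≤ s.card →
      ∃ t ⊆ s, t.card = k ∧ k * ∑ x ∈ s, f x ≤ s.card * ∑ x ∈ t, f x := by
  intro k
  induction k with
  | zero => intro s _; exact ⟨∅, empty_subset s, rfl, by simp⟩
  | succ k ih =>
    intro s hks
    have hne : s.Nonempty := card_pos.mp (lt_of_lt_of_le (Nat.succ_pos k) hks)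
    obtain ⟨a, ha, hmax⟩ := s.exists_max_image f hne
    have hsum : ∑ x ∈ s, f x ≤ s.card * f a := by
      calc ∑ x ∈ s, f x ≤ ∑ _x ∈ s, f a := Finset.sum_le_sum (fun b hb => hmax b hb)
        _ = s.card * f a := by simp [mul_comm]
    have hcard : (s.erase a).card = s.card - 1 := card_erase_of_mem ha
    have hk' : k ≤ (s.erase a).card := by omega
    obtain ⟨t, hts, htc, hineq⟩ := ih (s.erase a) hk'
    refine ⟨insert a t, ?_, ?_, ?_⟩
    · exact insert_subset ha (hts.trans (erase_subset a s))
    · rw [card_insert_of_notMem (fun hat => (mem_erase.mp (hts hat)).1 rfl), htc]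
    · have hsplit : ∑ x ∈ s, f x = f a + ∑ x ∈ s.erase a, f x := (Finset.add_sum_erase s f ha).symm
      have hins : ∑ x ∈ insert a t, f x = f a + ∑ x ∈ t, f x :=
        Finset.sum_insert (fun hat => (mem_erase.mp (hts hat)).1 rfl)
      obtain ⟨m, hm⟩ : ∃ m, s.card = m + 1 := ⟨s.card - 1, by omega⟩
      rw [hsplit, hins, hm]
      rw [hm, hsplit] at hsum
      rw [hcard, hm] at hineq
      simp only [Nat.add_sub_cancel] at hineq
      have hkm : k ≤ m := by omega
      set S' := ∑ x ∈ s.erase a, f x with hS'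
      set T := ∑ x ∈ t, f x with hT
      set F := f a with hF
      zify at hineq hsum hkm ⊢
      nlinarith [mul_nonneg (by linarith : (0:ℤ) ≤ (m:ℤ) - k) (by linarith : (0:ℤ) ≤ (m:ℤ) * F - S'), hineq, hsum]

/-- the optimal average detection performance is non-increasing in the
network lifetime: for positive integers `k ≤ k'`, `M(k)/k ≥ M(k')/k'`. -/
theorem optimal_detection_antitone
    {X Y : Type*} [Fintype X] [Fintype Y] [DecidableEq X] [DecidableEq Y]
    (A : X → Y → Prop) [∀ x y, Decidable (A x y)] (σ : ℕ) (hσ : 0 < σ)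
    (k k' : ℕ) (hk : 0 < k) (hkk' : k ≤ k') :
    (Mval A σ k : ℚ) / k ≥ (Mval A σ k' : ℚ) / k' := by
  have hk' : 0 < k' := lt_of_lt_of_le hk hkk'
  -- main natural number inequality
  have key : k * Mval A σ k' ≤ k' * Mval A σ k := by
    -- the feasible set for k' slots is nonempty
    set P' := ((Finset.univ : Finset (Fin k' → Finset X)).filter
      (fun S => ∀ x : X, (Finset.univ.filter fun j : Fin k' => x ∈ S j).card ≤ σ)) with hP'
    have hPne : P'.Nonempty := by
      refine ⟨fun _ => (∅ : Finset X), ?_⟩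
      simp [hP']
    obtain ⟨S, hSmem, hSval⟩ := Finset.exists_mem_eq_sup P' hPne
      (fun S => ∑ j : Fin k', ((S j).biUnion (fun x => Finset.univ.filter fun y : Y => A x y)).card)
    set f : Fin k' → ℕ :=
      fun j => ((S j).biUnion (fun x => Finset.univ.filter fun y : Y => A x y)).card with hf
    have hMk' : Mval A σ k' = ∑ j : Fin k', f j := hSval
    -- pick the best k slots
    have hcard : k ≤ (Finset.univ : Finset (Fin k')).card := by simpa using hkk'
    obtain ⟨t, -, htc, hineq⟩ := top_k_sum f k (Finset.univ : Finset (Fin k')) hcard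
    set e := t.orderEmbOfFin htc with he
    -- the restricted schedule is feasible for k slots
    have hSconstraint : ∀ x : X, (Finset.univ.filter fun j : Fin k' => x ∈ S j).card ≤ σ := by
      have := Finset.mem_filter.mp hSmem
      exact this.2
    have hfeas : (fun j : Fin k => S (e j)) ∈
        ((Finset.univ : Finset (Fin k → Finset X)).filter
          (fun T => ∀ x : X, (Finset.univ.filter fun j : Fin k => x ∈ T j).card ≤ σ)) := by
      refine Finset.mem_filter.mpr ⟨Finset.mem_univ _, fun x => ?_⟩
      refine le_trans ?_ (hSconstraint x)
      apply Finset.card_le_card_of_injOn (fun j => e j)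
      · intro j hj
        simp only [Finset.mem_coe, Finset.mem_filter, Finset.mem_univ, true_and] at hj ⊢
        exact hj
      · intro a _ b _ hab
        exact e.injective hab
    -- value of the restricted schedule
    have hvalle : ∑ x ∈ t, f x ≤ Mval A σ k := by
      have hmapt : Finset.univ.map e.toEmbedding = t := by
        apply Finset.eq_of_subset_of_card_le
        · intro j hj
          simp only [Finset.mem_map] at hj
          obtain ⟨i, -, rfl⟩ := hj
          exact t.orderEmbOfFin_mem htc i
        · simp [htc]
      have hsum : ∑ x ∈ t, f x = ∑ j : Fin k, f (e j) := by
        rw [← hmapt, Finset.sum_map]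
        rfl
      rw [hsum]
      exact Finset.le_sup (f := fun T => ∑ j : Fin k,
        ((T j).biUnion (fun x => Finset.univ.filter fun y : Y => A x y)).card) hfeas
    calc k * Mval A σ k' = k * ∑ j ∈ (Finset.univ : Finset (Fin k')), f j := by
            rw [hMk']
      _ ≤ (Finset.univ : Finset (Fin k')).card * ∑ x ∈ t, f x := hineq
      _ = k' * ∑ x ∈ t, f x := by simp
      _ ≤ k' * Mval A σ k := Nat.mul_le_mul_left k' hvalle
  rw [ge_iff_le, div_le_div_iff₀ (by positivity) (by exact_mod_cast hk)]
  exact_mod_cast by linarith [key]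
end
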